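/- Let a, b and n > 1 be positive integers with gcd(a, r_b(n)) = 1, set a_m = r_b(n) + a·r_b(m-1) for 1 ≤ m ≤ n, let k be a field, and let I ⊆ k[x_1,…,x_n] be the kernel of the k-algebra homomorphism sending x_m to t^{a_m}. Then I equals the ideal I_2(X) generated by the 2×2 minors of X, and these C(n,2) minors form a minimal generating set: no proper subset of the set of 2×2 minors of X generates I. -/

import Mathlib

/-- The ℓ-th repunit in base `b`: `r_b(ℓ) = ∑_{j=0}^{ℓ-1} b^j`, with `r_b(0) = 0`. -/
def rep (b ℓ : ℕ) : ℕ := ∑ j ∈ Finset.range ℓ, b ^ j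

/-- `a_m = r_b(n) + a · r_b(m-1)`. -/
def aseq (a b n m : ℕ) : ℕ := rep b n + a * rep b (m - 1)

/-- The variable `x_m` (1-indexed, `1 ≤ m ≤ n`) of `K[x_1, …, x_n]`. -/
noncomputable def xv (K : Type*) [Field K] (n m : ℕ) : MvPolynomial (Fin n) K :=
  if h : m - 1 < n then MvPolynomial.X ⟨m - 1, h⟩ else 0

/-- The set of 2×2 minors of the matrix `X` with rows `(x_1^b, …, x_{n-1}^b, x_n^b)` and
`(x_2, …, x_n, x_1^{a+1})`: the binomials `x_{j+1}·x_l^b − x_j^b·x_{l+1}` for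
`1 ≤ j < l ≤ n-1` together with `x_{l+1}·x_n^b − x_1^{a+1}·x_l^b` for `1 ≤ l ≤ n-1`. -/
def minorsX (K : Type*) [Field K] (a b n : ℕ) : Set (MvPolynomial (Fin n) K) :=
  { f | (∃ j l : ℕ, 1 ≤ j ∧ j < l ∧ l ≤ n - 1 ∧
          f = xv K n (j + 1) * xv K n l ^ b - xv K n j ^ b * xv K n (l + 1)) ∨
        (∃ l : ℕ, 1 ≤ l ∧ l ≤ n - 1 ∧
          f = xv K n (l + 1) * xv K n n ^ b - xv K n 1 ^ (a + 1) * xv K n l ^ b) }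

/-- The `K`-algebra homomorphism `φ : K[x_1,…,x_n] → K[t]`, `x_m ↦ t^{a_m}`. -/
noncomputable def φmap (K : Type*) [Field K] (a b n : ℕ) :
    MvPolynomial (Fin n) K →ₐ[K] Polynomial K :=
  MvPolynomial.aeval fun m : Fin n => Polynomial.X ^ aseq a b n ((m : ℕ) + 1)

set_option linter.unusedVariables false

namespace S16
open MvPolynomial Finsupp

lemma rep_zero (b : ℕ) : rep b 0 = 0 := rfl

lemma rep_succ (b ℓ : ℕ) : rep b (ℓ+1) = rep b ℓ + b ^ ℓ := Finset.sum_range_succ _ _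

lemma rep_succ' (b ℓ : ℕ) : rep b (ℓ+1) = 1 + b * rep b ℓ := by
  unfold rep
  rw [Finset.sum_range_succ']
  simp only [pow_succ, pow_zero, Finset.mul_sum]
  rw [add_comm]
  congr 1
  exact Finset.sum_congr rfl fun i _ => by ring

lemma rep_lt_succ (b : ℕ) (hb : 0 < b) (ℓ : ℕ) : rep b ℓ < rep b (ℓ+1) := by
  rw [rep_succ]
  have := Nat.one_le_pow ℓ b hb
  omega

lemma rep_strictMono (b : ℕ) (hb : 0 < b) : StrictMono (rep b) :=
  strictMono_nat_of_lt_succ (rep_lt_succ b hb)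

lemma rep_mono (b : ℕ) : Monotone (rep b) := by
  apply monotone_nat_of_le_succ
  intro ℓ; rw [rep_succ]; omega

lemma rep_pos (b : ℕ) {ℓ : ℕ} (hb : 0 < b) (hl : 0 < ℓ) : 0 < rep b ℓ := by
  calc 0 < rep b 1 := by simp [rep]
  _ ≤ rep b ℓ := rep_mono b hl

variable (a b n : ℕ)

/-- 0-indexed exponent weights: `A m = aseq (m+1)`. -/
def Aw (m : Fin n) : ℕ := rep b n + a * rep b (m : ℕ)

lemma aseq_eq (m : Fin n) : aseq a b n ((m : ℕ) + 1) = Aw a b n m := by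
  simp [aseq, Aw]

/-- The weighted degree of a monomial exponent. -/
def wdeg (e : Fin n →₀ ℕ) : ℕ := ∑ m, e m * Aw a b n m

lemma wdeg_add (e f : Fin n →₀ ℕ) : wdeg a b n (e + f) = wdeg a b n e + wdeg a b n f := by
  simp [wdeg, add_mul, Finset.sum_add_distrib]

lemma wdeg_single (m : Fin n) (k : ℕ) : wdeg a b n (Finsupp.single m k) = k * Aw a b n m := by
  simp [wdeg, Finsupp.single_apply]

end S16

namespace S16
open MvPolynomial Finsupp

def predf {n : ℕ} (p : Fin n) : Fin n :=
  ⟨(p : ℕ) - 1, Nat.lt_of_le_of_lt (Nat.sub_le _ _) p.isLt⟩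

noncomputable def uexp (b : ℕ) {n : ℕ} (p q : Fin n) : Fin n →₀ ℕ :=
  Finsupp.single p 1 + Finsupp.single q b

noncomputable def vexp (a b : ℕ) {n : ℕ} (p q : Fin n) : Fin n →₀ ℕ :=
  Finsupp.single (predf p) b +
  (if h : (q : ℕ) + 1 < n then Finsupp.single ⟨(q : ℕ) + 1, h⟩ 1
   else Finsupp.single ⟨0, Nat.lt_of_le_of_lt (Nat.zero_le _) q.isLt⟩ (a + 1))

noncomputable def Gb (K : Type*) [Field K] (a b : ℕ) {n : ℕ} (p q : Fin n) :
    MvPolynomial (Fin n) K :=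
  monomial (uexp b p q) 1 - monomial (vexp a b p q) 1

lemma rep_eq_succ_pred (b m : ℕ) (hm : 1 ≤ m) : rep b m = 1 + b * rep b (m - 1) := by
  conv_lhs => rw [show m = (m - 1) + 1 by omega]
  rw [rep_succ']

variable (a b n : ℕ)

lemma wdeg_uexp (p q : Fin n) :
    wdeg a b n (uexp b p q) = Aw a b n p + b * Aw a b n q := by
  rw [uexp, wdeg_add, wdeg_single, wdeg_single, one_mul]

lemma wdeg_vexp_lo {p q : Fin n} (h : (q : ℕ) + 1 < n) :
    wdeg a b n (vexp a b p q)
      = b * Aw a b n (predf p) + Aw a b n ⟨(q : ℕ) + 1, h⟩ := by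
  rw [vexp, dif_pos h, wdeg_add, wdeg_single, wdeg_single, one_mul]

lemma wdeg_vexp_hi {p q : Fin n} (h : ¬ ((q : ℕ) + 1 < n)) (h0 : 0 < n) :
    wdeg a b n (vexp a b p q)
      = b * Aw a b n (predf p) + (a + 1) * Aw a b n ⟨0, h0⟩ := by
  rw [vexp, dif_neg h, wdeg_add, wdeg_single, wdeg_single]

lemma key1 {p q : Fin n} (hp : 1 ≤ (p : ℕ)) (h : (q : ℕ) + 1 < n) :
    Aw a b n p + b * Aw a b n q = b * Aw a b n (predf p) + Aw a b n ⟨(q : ℕ) + 1, h⟩ := by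
  have h1 : rep b (p : ℕ) = 1 + b * rep b ((p : ℕ) - 1) := rep_eq_succ_pred b _ hp
  have h2 : rep b ((q : ℕ) + 1) = 1 + b * rep b (q : ℕ) := rep_succ' b _
  simp only [Aw, predf]
  rw [h1, h2]; ring

lemma key2 (hn : 1 < n) {p q : Fin n} (hp : 1 ≤ (p : ℕ))
    (h : (q : ℕ) = n - 1) (h0 : 0 < n) :
    Aw a b n p + b * Aw a b n q
      = b * Aw a b n (predf p) + (a + 1) * Aw a b n ⟨0, h0⟩ := by
  have h1 : rep b (p : ℕ) = 1 + b * rep b ((p : ℕ) - 1) := rep_eq_succ_pred b _ hp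
  have h2 : rep b n = 1 + b * rep b (n - 1) := rep_eq_succ_pred b n (by omega)
  simp only [Aw, predf, h, rep_zero]
  rw [h1, h2]; ring

lemma wdeg_uv {p q : Fin n} (hn : 1 < n) (hp : 1 ≤ (p : ℕ)) :
    wdeg a b n (uexp b p q) = wdeg a b n (vexp a b p q) := by
  by_cases h : (q : ℕ) + 1 < n
  · rw [wdeg_uexp, wdeg_vexp_lo a b n h]
    exact key1 a b n hp h
  · have hq : (q : ℕ) = n - 1 := by have := q.isLt; omega
    rw [wdeg_uexp, wdeg_vexp_hi a b n h (by omega)]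
    exact key2 a b n hn hp hq _

end S16

namespace S16
open MvPolynomial Finsupp

variable (a b n : ℕ) (K : Type*) [Field K]

lemma phi_monomial (e : Fin n →₀ ℕ) (c : K) :
    φmap K a b n (monomial e c) = Polynomial.C c * Polynomial.X ^ wdeg a b n e := by
  rw [φmap, aeval_monomial, Finsupp.prod_fintype _ _ (fun m => pow_zero _)]
  have hc : ∀ m ∈ (Finset.univ : Finset (Fin n)),
      (Polynomial.X ^ aseq a b n ((m : ℕ) + 1) : Polynomial K) ^ e m
        = Polynomial.X ^ (e m * Aw a b n m) := fun m _ => by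
    rw [← pow_mul, aseq_eq, mul_comm]
  rw [Finset.prod_congr rfl hc, Finset.prod_pow_eq_pow_sum, Polynomial.algebraMap_eq]
  rfl

lemma XXmon (i j : Fin n) (s t : ℕ) :
    (X i ^ s * X j ^ t : MvPolynomial (Fin n) K)
      = monomial (Finsupp.single i s + Finsupp.single j t) 1 := by
  rw [X_pow_eq_monomial, X_pow_eq_monomial, monomial_mul, one_mul]

lemma xv_eq (m : ℕ) (h1 : 1 ≤ m) (h2 : m ≤ n) :
    xv K n m = X (⟨m - 1, by omega⟩ : Fin n) := by
  rw [xv, dif_pos (by omega : m - 1 < n)]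

lemma Gb_eq_lo {p q : Fin n} (hp : 1 ≤ (p : ℕ)) (h : (q : ℕ) + 1 < n) :
    Gb K a b p q = xv K n ((p:ℕ) + 1) * xv K n ((q:ℕ)+1) ^ b
      - xv K n (p:ℕ) ^ b * xv K n ((q:ℕ)+1+1) := by
  rw [xv_eq n K ((p:ℕ)+1) (by omega) (by omega), xv_eq n K ((q:ℕ)+1) (by omega) (by omega),
    xv_eq n K (p:ℕ) (by omega) (by omega), xv_eq n K ((q:ℕ)+1+1) (by omega) (by omega)]
  rw [Gb, uexp, vexp, dif_pos h]
  rw [show (X (⟨(p:ℕ)+1-1, by omega⟩ : Fin n) : MvPolynomial (Fin n) K)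
      = X ⟨(p:ℕ)+1-1, by omega⟩ ^ 1 from (pow_one _).symm,
    show (X (⟨(q:ℕ)+1+1-1, by omega⟩ : Fin n) : MvPolynomial (Fin n) K)
      = X ⟨(q:ℕ)+1+1-1, by omega⟩ ^ 1 from (pow_one _).symm,
    XXmon, XXmon]
  rfl

lemma Gb_eq_hi (hn : 1 < n) {p q : Fin n} (hp : 1 ≤ (p : ℕ)) (hq : (q : ℕ) = n - 1) :
    Gb K a b p q = xv K n ((p:ℕ) + 1) * xv K n n ^ b
      - xv K n 1 ^ (a+1) * xv K n (p:ℕ) ^ b := by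
  rw [xv_eq n K ((p:ℕ)+1) (by omega) (by omega), xv_eq n K n (by omega) (by omega),
    xv_eq n K 1 (by omega) (by omega), xv_eq n K (p:ℕ) (by omega) (by omega)]
  rw [Gb, uexp, vexp, dif_neg (by omega : ¬ ((q:ℕ) + 1 < n))]
  rw [show (X (⟨(p:ℕ)+1-1, by omega⟩ : Fin n) : MvPolynomial (Fin n) K)
      = X ⟨(p:ℕ)+1-1, by omega⟩ ^ 1 from (pow_one _).symm, XXmon, XXmon]
  rw [add_comm (Finsupp.single (⟨1-1, by omega⟩ : Fin n) (a+1))]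
  have hq' : q = (⟨n-1, by omega⟩ : Fin n) := Fin.ext (by simpa using hq)
  rw [hq']
  rfl

lemma Gb_mem (hn : 1 < n) {p q : Fin n} (hp : 1 ≤ (p : ℕ)) (hpq : (p : ℕ) ≤ q) :
    Gb K a b p q ∈ minorsX K a b n := by
  by_cases h : (q : ℕ) + 1 < n
  · exact Or.inl ⟨(p : ℕ), (q : ℕ) + 1, hp, by omega, by omega,
      (Gb_eq_lo a b n K hp h).symm ▸ (Gb_eq_lo a b n K hp h)⟩
  · have hq : (q : ℕ) = n - 1 := by have := q.isLt; omega
    exact Or.inr ⟨(p : ℕ), hp, by omega, Gb_eq_hi a b n K hn hp hq⟩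
  
lemma mem_minors (hn : 1 < n) {f : MvPolynomial (Fin n) K} (hf : f ∈ minorsX K a b n) :
    ∃ p q : Fin n, 1 ≤ (p : ℕ) ∧ (p : ℕ) ≤ (q : ℕ) ∧ f = Gb K a b p q := by
  rcases hf with ⟨j, l, hj, hjl, hl, rfl⟩ | ⟨l, hl1, hl, rfl⟩
  · refine ⟨⟨j, by omega⟩, ⟨l - 1, by omega⟩, hj, ?_, ?_⟩
    · show j ≤ l - 1; omega
    · rw [Gb_eq_lo a b n K (by exact hj) (by show l - 1 + 1 < n; omega)]
      show _ = xv K n (j+1) * xv K n (l-1+1) ^ b - xv K n j ^ b * xv K n (l-1+1+1)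
      rw [show l - 1 + 1 = l by omega]
  · refine ⟨⟨l, by omega⟩, ⟨n - 1, by omega⟩, hl1, ?_, ?_⟩
    · show l ≤ n - 1; omega
    · rw [Gb_eq_hi a b n K hn (by exact hl1) (by show n - 1 = n - 1; rfl)]

lemma phi_Gb (hn : 1 < n) {p q : Fin n} (hp : 1 ≤ (p : ℕ)) :
    φmap K a b n (Gb K a b p q) = 0 := by
  rw [Gb, map_sub, phi_monomial, phi_monomial, wdeg_uv a b n hn hp, sub_self]

lemma span_le_ker (hn : 1 < n) :
    Ideal.span (minorsX K a b n) ≤ RingHom.ker (φmap K a b n) := by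
  rw [Ideal.span_le]
  intro f hf
  obtain ⟨p, q, hp, hpq, rfl⟩ := mem_minors a b n K hn hf
  simp only [SetLike.mem_coe, RingHom.mem_ker]
  exact phi_Gb a b n K hn hp

end S16

namespace S16
open MvPolynomial Finsupp

variable (a b n : ℕ)

/-- normal form exponents -/
def Norm (b : ℕ) {n : ℕ} (e : Fin n →₀ ℕ) : Prop :=
  (∀ i l : Fin n, 1 ≤ (i:ℕ) → (i:ℕ) < (l:ℕ) → 1 ≤ e i → e l < b) ∧
  (∀ i : Fin n, 1 ≤ (i:ℕ) → e i ≤ b)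

lemma uexp_apply (p q m : Fin n) :
    uexp b p q m = (if p = m then 1 else 0) + (if q = m then b else 0) := by
  simp [uexp, Finsupp.single_apply]

lemma not_norm {e : Fin n →₀ ℕ} (h : ¬ Norm b e) :
    ∃ p q : Fin n, 1 ≤ (p:ℕ) ∧ (p:ℕ) ≤ (q:ℕ) ∧ ∃ c, e = c + uexp b p q := by
  rw [Norm] at h
  push_neg at h
  have key : ∀ p q : Fin n, 1 ≤ (p:ℕ) → (p:ℕ) ≤ (q:ℕ) →
      (∀ m, uexp b p q m ≤ e m) → ∃ c, e = c + uexp b p q := by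
    intro p q _ _ hle
    refine ⟨e - uexp b p q, ?_⟩
    ext m
    simp only [Finsupp.add_apply, Finsupp.tsub_apply]
    have := hle m
    omega
  by_cases h1 : ∀ i l : Fin n, 1 ≤ (i:ℕ) → (i:ℕ) < (l:ℕ) → 1 ≤ e i → e l < b
  · obtain ⟨i, h2, h3⟩ := h h1
    refine ⟨i, i, h2, le_rfl, key i i h2 le_rfl ?_⟩
    intro m
    rw [uexp_apply]
    by_cases him : i = m
    · subst him; simp; omega
    · simp [him]
  · push_neg at h1
    obtain ⟨i, l, h2, h3, h4, h5⟩ := h1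
    refine ⟨i, l, h2, by omega, key i l h2 (by omega) ?_⟩
    intro m
    rw [uexp_apply]
    have hil : i ≠ l := fun hq => by rw [hq] at h3; omega
    by_cases him : i = m
    · subst him
      simp [show ¬ (l = i) from fun hq => hil hq.symm]
      omega
    · by_cases hlm : l = m
      · subst hlm; simp [him]; omega
      · simp [him, hlm]

/-- first measure component -/
def S1 {n : ℕ} (e : Fin n →₀ ℕ) : ℕ :=
  ∑ m, e m * ((m:ℕ) + if (m:ℕ) = 0 then 0 else 1)

/-- third measure component -/
def thrd (n' : ℕ) {n : ℕ} (e : Fin n →₀ ℕ) : ℕ :=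
  ∑ m, e m * ((m:ℕ) * (n' - (m:ℕ)))

def meas (n' : ℕ) {n : ℕ} (e : Fin n →₀ ℕ) : ℕ :=
  (2*n'+2) * (S1 e)^2 + thrd n' e

lemma S1_add (e f : Fin n →₀ ℕ) : S1 (e + f) = S1 e + S1 f := by
  simp [S1, add_mul, Finset.sum_add_distrib]

lemma S1_single (m : Fin n) (k : ℕ) :
    S1 (Finsupp.single m k) = k * ((m:ℕ) + if (m:ℕ) = 0 then 0 else 1) := by
  simp [S1, Finsupp.single_apply]

lemma thrd_add (e f : Fin n →₀ ℕ) : thrd n (e + f) = thrd n e + thrd n f := by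
  simp [thrd, add_mul, Finset.sum_add_distrib]

lemma thrd_single (m : Fin n) (k : ℕ) :
    thrd n (Finsupp.single m k) = k * ((m:ℕ) * (n - (m:ℕ))) := by
  simp [thrd, Finsupp.single_apply]

lemma thrd_le (e : Fin n →₀ ℕ) : thrd n e ≤ n * S1 e := by
  rw [thrd, S1, Finset.mul_sum]
  apply Finset.sum_le_sum
  intro m _
  have h1 : (m:ℕ) * (n - (m:ℕ)) ≤ n * ((m:ℕ) + if (m:ℕ) = 0 then 0 else 1) := by
    have : (m:ℕ) * (n - (m:ℕ)) ≤ (m:ℕ) * n := Nat.mul_le_mul_left _ (Nat.sub_le _ _)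
    have h2 : (m:ℕ) * n = n * (m:ℕ) := Nat.mul_comm _ _
    split_ifs <;> nlinarith
  calc e m * ((m:ℕ) * (n - (m:ℕ))) ≤ e m * (n * ((m:ℕ) + if (m:ℕ) = 0 then 0 else 1)) :=
        Nat.mul_le_mul_left _ h1
    _ = n * (e m * ((m:ℕ) + if (m:ℕ) = 0 then 0 else 1)) := by ring

lemma meas_key (s tc tu tv x y : ℕ) (h : y < x) (h3 : tv ≤ n * y) :
    (2*n+2) * (s+y)^2 + (tc + tv) < (2*n+2) * (s+x)^2 + (tc + tu) := by
  have h4 : (s+y+1)^2 ≤ (s+x)^2 := Nat.pow_le_pow_left (by omega) 2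
  have h5 : (2*n+2)*(s+y+1)^2 ≤ (2*n+2)*(s+x)^2 := Nat.mul_le_mul_left _ h4
  have h6 : (2*n+2)*(s+y+1)^2 = (2*n+2)*(s+y)^2 + (2*n+2)*(2*(s+y)+1) := by ring
  have h8 : n*y + 1 ≤ (2*n+2)*(2*(s+y)+1) := by nlinarith [Nat.zero_le (n*s)]
  linarith

lemma meas_uv {p q : Fin n} (hb : 0 < b) (hn : 1 < n) (hp : 1 ≤ (p:ℕ)) (hpq : (p:ℕ) ≤ q)
    (c : Fin n →₀ ℕ) :
    meas n (c + vexp a b p q) < meas n (c + uexp b p q) := by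
  have hS1u : S1 (uexp b p q) = ((p:ℕ)+1) + b * ((q:ℕ)+1) := by
    rw [uexp, S1_add, S1_single, S1_single]
    have h1 : ¬ ((p:ℕ) = 0) := by omega
    have h2 : ¬ ((q:ℕ) = 0) := by omega
    simp [h1, h2]
  have hTu : thrd n (uexp b p q) = (p:ℕ) * (n - (p:ℕ)) + b * ((q:ℕ) * (n - (q:ℕ))) := by
    rw [uexp, thrd_add, thrd_single, thrd_single]; ring
  by_cases h : (q:ℕ) + 1 < n
  · have hS1v : S1 (vexp a b p q)
        = b * (((p:ℕ)-1) + if (p:ℕ)-1 = 0 then 0 else 1) + ((q:ℕ)+2) := by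
      rw [vexp, dif_pos h, S1_add, S1_single, S1_single]
      simp only [predf]
      have h2 : ¬ ((q:ℕ) + 1 = 0) := by omega
      simp [h2]
      exact Or.inl rfl
      try ring
    by_cases hcase : b = 1 ∧ 2 ≤ (p:ℕ)
    · obtain ⟨hb1, hp2⟩ := hcase
      -- equal S1, strictly smaller thrd
      have hS1eq : S1 (vexp a b p q) = S1 (uexp b p q) := by
        rw [hS1u, hS1v, hb1]
        have : ¬ ((p:ℕ) - 1 = 0) := by omega
        simp only [this, if_false, one_mul]
        omega
      have hTv : thrd n (vexp a b p q)
          = b * (((p:ℕ)-1) * (n - ((p:ℕ)-1))) + ((q:ℕ)+1) * (n - ((q:ℕ)+1)) := by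
        rw [vexp, dif_pos h, thrd_add, thrd_single, thrd_single]
        simp only [predf]
        try ring
      have hTlt : thrd n (vexp a b p q) < thrd n (uexp b p q) := by
        rw [hTu, hTv, hb1]
        have e1 : (p:ℕ) - 1 ≤ n := by omega
        have e2 : (p:ℕ) ≤ n := by omega
        have e3 : (q:ℕ) + 1 ≤ n := by omega
        have e4 : (q:ℕ) ≤ n := by omega
        zify [e1, e2, e3, e4]
        have : (1 ≤ (p:ℕ) - 1) := by omega
        zify at this
        have hq1 : ((p:ℕ) : ℤ) - 1 = (((p:ℕ) - 1 : ℕ) : ℤ) := by omega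
        nlinarith [hq1]
      rw [meas, meas, S1_add, S1_add, thrd_add, thrd_add, hS1eq]
      omega
    · -- S1 strictly decreases
      have hlt : S1 (vexp a b p q) < S1 (uexp b p q) := by
        rw [hS1u, hS1v]
        rcases Nat.lt_or_ge (p:ℕ) 2 with hp1 | hp2
        · have : (p:ℕ) = 1 := by omega
          rw [this]
          simp
          have : (q:ℕ) + 1 ≤ b * ((q:ℕ)+1) := Nat.le_mul_of_pos_left _ hb
          omega
        · have hb2 : 2 ≤ b := by
            rcases Nat.lt_or_ge b 2 with h1 | h2
            · exfalso; exact hcase ⟨by omega, hp2⟩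
            · exact h2
          have : ¬ ((p:ℕ) - 1 = 0) := by omega
          simp only [this, if_false]
          have hk : b * ((p:ℕ) - 1 + 1) = b * (p:ℕ) := by congr 1; omega
          nlinarith
      rw [meas, meas, S1_add, S1_add, thrd_add, thrd_add]
      exact meas_key n _ _ _ _ _ _ hlt (thrd_le n _)
  · -- q = n-1 case : S1 strictly decreases
    have hS1v : S1 (vexp a b p q)
        = b * (((p:ℕ)-1) + if (p:ℕ)-1 = 0 then 0 else 1) := by
      rw [vexp, dif_neg h, S1_add, S1_single, S1_single]
      simp [predf]
      exact Or.inl rfl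
    have hlt : S1 (vexp a b p q) < S1 (uexp b p q) := by
      rw [hS1u, hS1v]
      have h1 : ((p:ℕ)-1) + (if (p:ℕ)-1 = 0 then 0 else 1) ≤ (p:ℕ) := by
        split_ifs <;> omega
      have h2 : b * (((p:ℕ)-1) + if (p:ℕ)-1 = 0 then 0 else 1) ≤ b * (p:ℕ) :=
        Nat.mul_le_mul_left _ h1
      have h3 : b * (p:ℕ) ≤ b * ((q:ℕ)+1) := Nat.mul_le_mul_left _ (by omega)
      omega
    rw [meas, meas, S1_add, S1_add, thrd_add, thrd_add]
    exact meas_key n _ _ _ _ _ _ hlt (thrd_le n _)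

end S16

namespace S16
open MvPolynomial Finsupp

variable (a b n : ℕ) (K : Type*) [Field K]

lemma mono_mul_Gb (c : Fin n →₀ ℕ) (p q : Fin n) :
    monomial c (1:K) * Gb K a b p q
      = monomial (c + uexp b p q) (1:K) - monomial (c + vexp a b p q) 1 := by
  rw [Gb, mul_sub, monomial_mul, monomial_mul, one_mul]

lemma reduce (hb : 0 < b) (hn : 1 < n) (e : Fin n →₀ ℕ) :
    ∃ e', Norm b e' ∧ wdeg a b n e' = wdeg a b n e ∧
      (monomial e (1:K) - monomial e' 1) ∈ Ideal.span (minorsX K a b n) := by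
  suffices H : ∀ M : ℕ, ∀ e : Fin n →₀ ℕ, meas n e ≤ M →
      ∃ e', Norm b e' ∧ wdeg a b n e' = wdeg a b n e ∧
        (monomial e (1:K) - monomial e' 1) ∈ Ideal.span (minorsX K a b n) by
    exact H (meas n e) e le_rfl
  intro M
  induction M using Nat.strong_induction_on with
  | _ M ih =>
    intro e hMe
    by_cases hN : Norm b e
    · exact ⟨e, hN, rfl, by rw [sub_self]; exact Ideal.zero_mem _⟩
    · obtain ⟨p, q, hp, hpq, c, rfl⟩ := not_norm b n hN
      have hlt : meas n (c + vexp a b p q) < meas n (c + uexp b p q) :=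
        meas_uv a b n hb hn hp hpq c
      obtain ⟨e'', h1, h2, h3⟩ :=
        ih (meas n (c + vexp a b p q)) (by omega) (c + vexp a b p q) le_rfl
      refine ⟨e'', h1, ?_, ?_⟩
      · rw [h2, wdeg_add, wdeg_add, wdeg_uv a b n hn hp]
      · have step : (monomial (c + uexp b p q) (1:K) - monomial (c + vexp a b p q) 1)
            ∈ Ideal.span (minorsX K a b n) := by
          rw [← mono_mul_Gb]
          exact Ideal.mul_mem_left _ _ (Ideal.subset_span (Gb_mem a b n K hn hp hpq))
        have := Ideal.add_mem _ step h3
        simpa using this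

end S16

namespace S16
open MvPolynomial Finsupp

variable (a b n : ℕ)

def Tval (b : ℕ) {n : ℕ} (e : Fin n →₀ ℕ) : ℕ := ∑ m, e m * rep b (m:ℕ)

def ev {n : ℕ} (e : Fin n →₀ ℕ) (j : ℕ) : ℕ := if h : j < n then e ⟨j, h⟩ else 0

def Tpart (b : ℕ) {n : ℕ} (N : ℕ) (e : Fin n →₀ ℕ) : ℕ :=
  ∑ j ∈ Finset.range N, ev e j * rep b j

lemma Tpart_n (e : Fin n →₀ ℕ) : Tpart b n e = Tval b e := by
  rw [Tpart, Tval, ← Fin.sum_univ_eq_sum_range (fun j => ev e j * rep b j) n]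
  apply Finset.sum_congr rfl
  intro m _
  simp [ev]

lemma wdeg_split (e : Fin n →₀ ℕ) :
    wdeg a b n e = (∑ m, e m) * rep b n + a * Tval b e := by
  rw [wdeg, Tval, Finset.sum_mul, Finset.mul_sum, ← Finset.sum_add_distrib]
  apply Finset.sum_congr rfl
  intro m _
  rw [Aw]; ring

lemma Tpart_bound (hb : 0 < b) {e : Fin n →₀ ℕ} (he : Norm b e) (N : ℕ) :
    Tpart b (N+1) e ≤ b * rep b N := by
  induction N with
  | zero => simp [Tpart, rep_zero]
  | succ N IH =>
    rw [Tpart, Finset.sum_range_succ, ← Tpart]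
    rcases Nat.eq_zero_or_pos (ev e (N+1)) with h0 | h1
    · rw [h0, zero_mul, add_zero]
      exact le_trans IH (Nat.mul_le_mul_left _ (rep_mono b (Nat.le_succ N)))
    · have hlt : N + 1 < n := by
        by_contra hc
        rw [ev, dif_neg hc] at h1; omega
      have hx1 : 1 ≤ e ⟨N+1, hlt⟩ := by rw [ev, dif_pos hlt] at h1; exact h1
      have hxb : e ⟨N+1, hlt⟩ ≤ b := he.2 _ (by simp)
      rcases Nat.lt_or_ge (e ⟨N+1, hlt⟩) b with hxlt | hxge
      · have hev : ev e (N+1) ≤ b - 1 := by rw [ev, dif_pos hlt]; omega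
        have h2 : ev e (N+1) * rep b (N+1) ≤ (b-1) * rep b (N+1) :=
          Nat.mul_le_mul_right _ hev
        have h3 : rep b (N+1) = 1 + b * rep b N := rep_succ' b N
        have h4 : (b - 1) * rep b (N+1) + rep b (N+1) = b * rep b (N+1) := by
          rw [← Nat.succ_mul]
          congr 1
          omega
        linarith
      · have hxb' : e ⟨N+1, hlt⟩ = b := by omega
        have hT0 : Tpart b (N+1) e = 0 := by
          rw [Tpart]
          apply Finset.sum_eq_zero
          intro j hj
          rw [Finset.mem_range] at hj
          rcases Nat.eq_zero_or_pos j with hj0 | hj1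
          · rw [hj0, rep_zero, mul_zero]
          · rw [ev]
            split_ifs with hjn
            · have : e ⟨j, hjn⟩ = 0 := by
                by_contra hc
                have := he.1 ⟨j, hjn⟩ ⟨N+1, hlt⟩ (by show 1 ≤ j; omega) (by simpa using hj)
                  (by omega)
                omega
              rw [this, zero_mul]
            · rw [zero_mul]
        rw [hT0, zero_add, ev, dif_pos hlt, hxb']

lemma Tpart_inj (hb : 0 < b) {e f : Fin n →₀ ℕ} (he : Norm b e) (hf : Norm b f) :
    ∀ N, Tpart b N e = Tpart b N f → ∀ j, 1 ≤ j → j < N → ev e j = ev f j := by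
  intro N
  induction N with
  | zero => intro _ j _ hj; omega
  | succ N IH =>
    intro hT j hj1 hjN
    rcases Nat.eq_zero_or_pos N with hN0 | hN1
    · omega
    · -- show top coefficients are equal
      have htop : ev e N = ev f N := by
        have key : ∀ g g' : Fin n →₀ ℕ, Norm b g → Norm b g' →
            Tpart b (N+1) g = Tpart b (N+1) g' → ¬ (ev g N < ev g' N) := by
          intro g g' hg hg' hTg hlt
          have hbd : Tpart b N g ≤ b * rep b (N-1) := by
            have := Tpart_bound b n hb hg (N-1)
            rwa [show N - 1 + 1 = N by omega] at this
          have hr : rep b N = 1 + b * rep b (N-1) := by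
            rw [show N = (N-1)+1 by omega, rep_succ']
            rw [show N - 1 + 1 - 1 = N - 1 by omega]
          have h2 : Tpart b (N+1) g = Tpart b N g + ev g N * rep b N := by
            rw [Tpart, Tpart, Finset.sum_range_succ]
          have h3 : Tpart b (N+1) g' = Tpart b N g' + ev g' N * rep b N := by
            rw [Tpart, Tpart, Finset.sum_range_succ]
          have h4 : (ev g N + 1) * rep b N ≤ ev g' N * rep b N :=
            Nat.mul_le_mul_right _ (by omega)
          have h5 : (ev g N + 1) * rep b N = ev g N * rep b N + rep b N := by ring
          linarith [Nat.zero_le (Tpart b N g')]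
        rcases lt_trichotomy (ev e N) (ev f N) with hc | hc | hc
        · exact absurd hc (key e f he hf hT)
        · exact hc
        · exact absurd hc (key f e hf he hT.symm)
      rcases Nat.lt_or_ge j N with hjlt | hjge
      · -- use IH after cancelling the top term
        have h2 : Tpart b (N+1) e = Tpart b N e + ev e N * rep b N := by
          rw [Tpart, Tpart, Finset.sum_range_succ]
        have h3 : Tpart b (N+1) f = Tpart b N f + ev f N * rep b N := by
          rw [Tpart, Tpart, Finset.sum_range_succ]
        have : Tpart b N e = Tpart b N f := by
          rw [h2, h3, htop] at hT
          exact Nat.add_right_cancel hT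
        exact IH this j hj1 hjlt
      · have : j = N := by omega
        rw [this]; exact htop

end S16

namespace S16
open MvPolynomial Finsupp

variable (a b n : ℕ)

lemma Tval_lt (hb : 0 < b) (hn : 1 < n) {e : Fin n →₀ ℕ} (he : Norm b e) :
    Tval b e < rep b n := by
  have h1 : Tval b e ≤ b * rep b (n-1) := by
    rw [← Tpart_n b n]
    have := Tpart_bound b n hb he (n-1)
    rwa [show n - 1 + 1 = n by omega] at this
  have h2 : rep b n = 1 + b * rep b (n-1) := by
    rw [show n = (n-1)+1 by omega, rep_succ']
    rw [show n - 1 + 1 - 1 = n - 1 by omega]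
  omega

lemma winj (hb : 0 < b) (hn : 1 < n) (hgcd : Nat.gcd a (rep b n) = 1)
    {e f : Fin n →₀ ℕ} (he : Norm b e) (hf : Norm b f)
    (hw : wdeg a b n e = wdeg a b n f) : e = f := by
  set r := rep b n with hr
  have hrpos : 0 < r := rep_pos b hb (by omega)
  rw [wdeg_split, wdeg_split] at hw
  have hTe := Tval_lt b n hb hn he
  have hTf := Tval_lt b n hb hn hf
  -- Tval equal
  have hmod : (a * Tval b e) % r = (a * Tval b f) % r := by
    calc (a * Tval b e) % r = (a * Tval b e + (∑ m, e m) * r) % r := by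
          rw [Nat.add_mul_mod_self_right]
      _ = (a * Tval b f + (∑ m, f m) * r) % r := by rw [add_comm, hw, add_comm]
      _ = (a * Tval b f) % r := by rw [Nat.add_mul_mod_self_right]
  have hT : Tval b e = Tval b f := by
    have hgcd' : Nat.gcd r a = 1 := by rwa [Nat.gcd_comm]
    have h2 : Tval b e ≡ Tval b f [MOD r] :=
      Nat.ModEq.cancel_left_of_coprime hgcd' hmod
    have h3 : Tval b e % r = Tval b f % r := h2
    rw [Nat.mod_eq_of_lt hTe, Nat.mod_eq_of_lt hTf] at h3
    exact h3
  -- sums equal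
  have hE : (∑ m, e m) = (∑ m, f m) := by
    rw [hT] at hw
    have := Nat.add_right_cancel hw
    exact Nat.eq_of_mul_eq_mul_right hrpos this
  -- pointwise for positive indices
  have htail : ∀ m : Fin n, 1 ≤ (m:ℕ) → e m = f m := by
    intro m hm
    have hTp : Tpart b n e = Tpart b n f := by rw [Tpart_n, Tpart_n, hT]
    have := Tpart_inj b n hb he hf n hTp (m:ℕ) hm m.isLt
    simpa [ev] using this
  -- index zero
  have hz : e ⟨0, by omega⟩ = f ⟨0, by omega⟩ := by
    set z : Fin n := ⟨0, by omega⟩ with hzdef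
    have h1 : e z + ∑ m ∈ Finset.univ.erase z, e m = ∑ m, e m :=
      Finset.add_sum_erase _ _ (Finset.mem_univ z)
    have h2 : f z + ∑ m ∈ Finset.univ.erase z, f m = ∑ m, f m :=
      Finset.add_sum_erase _ _ (Finset.mem_univ z)
    have h3 : ∑ m ∈ Finset.univ.erase z, e m = ∑ m ∈ Finset.univ.erase z, f m := by
      apply Finset.sum_congr rfl
      intro m hm
      have hmz : m ≠ z := Finset.ne_of_mem_erase hm
      have : 1 ≤ (m:ℕ) := by
        by_contra hc
        exact hmz (Fin.ext (show (m:ℕ) = 0 by omega))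
      exact htail m this
    linarith
  ext m
  by_cases hm : 1 ≤ (m:ℕ)
  · exact htail m hm
  · have : m = ⟨0, by omega⟩ := Fin.ext (show (m:ℕ) = 0 by omega)
    rw [this]; exact hz

end S16

namespace S16
open MvPolynomial Finsupp

variable (a b n : ℕ) (K : Type*) [Field K]

lemma ker_le_span (hb : 0 < b) (hn : 1 < n) (hgcd : Nat.gcd a (rep b n) = 1) :
    RingHom.ker (φmap K a b n) ≤ Ideal.span (minorsX K a b n) := by
  intro f hker
  rw [RingHom.mem_ker] at hker
  have hred := reduce a b n K hb hn
  choose nf hnf1 hnf2 hnf3 using hred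
  set J := Ideal.span (minorsX K a b n) with hJ
  set g : MvPolynomial (Fin n) K :=
    ∑ e ∈ f.support, monomial (nf e) (MvPolynomial.coeff e f) with hg
  have hfg : f - g ∈ J := by
    have hfs : f - g
        = ∑ e ∈ f.support, (monomial e (coeff e f) - monomial (nf e) (coeff e f)) := by
      rw [Finset.sum_sub_distrib, ← hg]
      congr 1
      exact as_sum f
    rw [hfs]
    refine Ideal.sum_mem _ (fun e _ => ?_)
    have hrw : monomial e (coeff e f) - monomial (nf e) (coeff e f)
        = C (coeff e f) * (monomial e 1 - monomial (nf e) 1) := by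
      rw [mul_sub, C_mul_monomial, C_mul_monomial]; ring_nf
    rw [hrw]
    exact Ideal.mul_mem_left _ _ (hnf3 e)
  have hgker : φmap K a b n g = 0 := by
    have h1 : φmap K a b n (f - g) = 0 := by
      have := span_le_ker a b n K hn hfg
      rwa [RingHom.mem_ker] at this
    rw [map_sub, hker, zero_sub, neg_eq_zero] at h1
    exact h1
  have hgnorm : ∀ e ∈ g.support, Norm b e := by
    intro e hesupp
    rw [hg] at hesupp
    have := MvPolynomial.support_sum hesupp
    rw [Finset.mem_biUnion] at this
    obtain ⟨e0, _, he⟩ := this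
    have := MvPolynomial.support_monomial_subset he
    rw [Finset.mem_singleton] at this
    rw [this]
    exact hnf1 e0
  have hgzero : g = 0 := by
    by_contra hne
    obtain ⟨d, hd⟩ : ∃ d, d ∈ g.support := by
      rcases Finset.eq_empty_or_nonempty g.support with hsupp | ⟨d, hd⟩
      · exact absurd (MvPolynomial.support_eq_empty.mp hsupp) hne
      · exact ⟨d, hd⟩
    have hphi : (0 : Polynomial K)
        = ∑ e ∈ g.support, Polynomial.C (coeff e g) * Polynomial.X ^ (wdeg a b n e) := by
      rw [← hgker]
      conv_lhs => rw [as_sum g]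
      rw [map_sum]
      exact Finset.sum_congr rfl fun e _ => phi_monomial a b n K e _
    have hcoeff := congrArg (fun P => Polynomial.coeff P (wdeg a b n d)) hphi
    simp only [Polynomial.coeff_zero, Polynomial.finset_sum_coeff,
      Polynomial.coeff_C_mul, Polynomial.coeff_X_pow] at hcoeff
    rw [Finset.sum_eq_single_of_mem d hd] at hcoeff
    · simp at hcoeff
      exact (MvPolynomial.mem_support_iff.mp hd) hcoeff.symm
    · intro e hesupp hne'
      have : ¬ (wdeg a b n d = wdeg a b n e) := by
        intro hww
        exact hne' (winj a b n hb hn hgcd (hgnorm e hesupp) (hgnorm d hd) hww.symm)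
      simp [this]
  rw [hgzero, sub_zero] at hfg
  exact hfg

lemma ker_eq_span (ha : 0 < a) (hb : 0 < b) (hn : 1 < n) (hgcd : Nat.gcd a (rep b n) = 1) :
    RingHom.ker (φmap K a b n) = Ideal.span (minorsX K a b n) :=
  le_antisymm (ker_le_span a b n K hb hn hgcd) (span_le_ker a b n K hn)

end S16

namespace S16
open MvPolynomial Finsupp
open scoped Classical

variable (a b n : ℕ) (K : Type*) [Field K]

noncomputable def lam (cond : (Fin n →₀ ℕ) → Prop) (f : MvPolynomial (Fin n) K) : K :=
  ∑ e ∈ f.support, if cond e then coeff e f else 0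

lemma lam_eq_sum_of_subset (cond : (Fin n →₀ ℕ) → Prop) (f : MvPolynomial (Fin n) K)
    (s : Finset (Fin n →₀ ℕ)) (h : f.support ⊆ s) :
    lam n K cond f = ∑ e ∈ s, if cond e then coeff e f else 0 := by
  refine Finset.sum_subset h (fun e _ he => ?_)
  rw [MvPolynomial.notMem_support_iff.mp he]
  simp

lemma lam_add (cond : (Fin n →₀ ℕ) → Prop) (f g : MvPolynomial (Fin n) K) :
    lam n K cond (f + g) = lam n K cond f + lam n K cond g := by
  rw [lam_eq_sum_of_subset n K cond (f+g) (f.support ∪ g.support)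
      (le_trans MvPolynomial.support_add (le_refl _)),
    lam_eq_sum_of_subset n K cond f (f.support ∪ g.support) Finset.subset_union_left,
    lam_eq_sum_of_subset n K cond g (f.support ∪ g.support) Finset.subset_union_right,
    ← Finset.sum_add_distrib]
  refine Finset.sum_congr rfl (fun e _ => ?_)
  rw [MvPolynomial.coeff_add]
  split_ifs <;> simp

noncomputable def lamHom (cond : (Fin n →₀ ℕ) → Prop) : MvPolynomial (Fin n) K →+ K :=
  AddMonoidHom.mk' (lam n K cond) (lam_add n K cond)

lemma lam_monomial (cond : (Fin n →₀ ℕ) → Prop) (e : Fin n →₀ ℕ) (c : K) :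
    lam n K cond (monomial e c) = if cond e then c else 0 := by
  rcases eq_or_ne c 0 with rfl | hne
  · simp [lam]
  · rw [lam]
    rw [MvPolynomial.support_monomial, if_neg hne]
    rw [Finset.sum_singleton, MvPolynomial.coeff_monomial, if_pos rfl]

lemma lam_mul (cond : (Fin n →₀ ℕ) → Prop) (P : MvPolynomial (Fin n) K) (u v : Fin n →₀ ℕ)
    (h : ∀ c, cond (c + u) ↔ cond (c + v)) :
    lam n K cond (P * (monomial u 1 - monomial v 1)) = 0 := by
  have hexp : P * (monomial u 1 - monomial v 1)
      = ∑ e ∈ P.support, ((monomial (e+u) (coeff e P)) - (monomial (e+v) (coeff e P))) := by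
    conv_lhs => rw [as_sum P]
    rw [Finset.sum_mul]
    refine Finset.sum_congr rfl (fun e _ => ?_)
    rw [mul_sub, monomial_mul, monomial_mul]; ring_nf
  rw [hexp]
  rw [show ∀ Q : MvPolynomial (Fin n) K, lam n K cond Q = lamHom n K cond Q from fun _ => rfl]
  rw [map_sum]
  refine Finset.sum_eq_zero (fun e _ => ?_)
  rw [map_sub]
  show lam n K cond _ - lam n K cond _ = 0
  rw [lam_monomial, lam_monomial, if_congr (h e) rfl rfl, sub_self]

noncomputable def lamIdeal (cond : (Fin n →₀ ℕ) → Prop) : Ideal (MvPolynomial (Fin n) K) where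
  carrier := {f | ∀ P, lam n K cond (P * f) = 0}
  zero_mem' := by
    intro P
    rw [mul_zero]
    show lam n K cond 0 = 0
    simp [lam]
  add_mem' := by
    intro f g hf hg P
    rw [mul_add, lam_add, hf P, hg P, add_zero]
  smul_mem' := by
    intro c f hf P
    rw [smul_eq_mul, ← mul_assoc]
    exact hf (P * c)

end S16

namespace S16
open MvPolynomial Finsupp

variable (a b n : ℕ)

def condA (p0 q0 : Fin n) (e : Fin n →₀ ℕ) : Prop :=
  wdeg a b n e = wdeg a b n (uexp b p0 q0) ∧ (∑ m, e m) = 1 + b ∧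
  (∀ m : Fin n, (q0:ℕ) + 1 < n → (m:ℕ) < (p0:ℕ) → e m = 0)

lemma dsum_add (e f : Fin n →₀ ℕ) : (∑ m, (e + f) m) = (∑ m, e m) + (∑ m, f m) := by
  simp [Finset.sum_add_distrib]

lemma dsum_single (p : Fin n) (k : ℕ) : (∑ m, Finsupp.single p k m) = k := by
  simp [Finsupp.single_apply]

lemma dsum_uexp (p q : Fin n) : (∑ m, uexp b p q m) = 1 + b := by
  rw [uexp, dsum_add, dsum_single, dsum_single]

lemma dsum_vexp_lo {p q : Fin n} (h : (q:ℕ) + 1 < n) :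
    (∑ m, vexp a b p q m) = b + 1 := by
  rw [vexp, dif_pos h, dsum_add, dsum_single, dsum_single]

lemma dsum_vexp_hi {p q : Fin n} (h : ¬ ((q:ℕ) + 1 < n)) :
    (∑ m, vexp a b p q m) = b + (a + 1) := by
  rw [vexp, dif_neg h, dsum_add, dsum_single, dsum_single]

lemma dsum_zero {e : Fin n →₀ ℕ} (h : (∑ m, e m) = 0) : e = 0 := by
  ext m
  have := Finset.sum_eq_zero_iff.mp h m (Finset.mem_univ m)
  simpa using this

lemma uexp_apply_ge_p (p q : Fin n) : 1 ≤ uexp b p q p := by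
  rw [uexp_apply]
  simp

lemma vexp_apply_pred_lo {p q : Fin n} (h : (q:ℕ) + 1 < n) :
    b ≤ vexp a b p q (predf p) := by
  rw [vexp, dif_pos h]
  simp [Finsupp.single_apply]

lemma vexp_apply_pred_hi {p q : Fin n} (h : ¬ ((q:ℕ) + 1 < n)) :
    b ≤ vexp a b p q (predf p) := by
  rw [vexp, dif_neg h]
  simp [Finsupp.single_apply]

lemma uexp_apply_small {p q m : Fin n} (hm : (m:ℕ) < (p:ℕ)) (hpq : (p:ℕ) ≤ (q:ℕ)) :
    uexp b p q m = 0 := by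
  rw [uexp_apply]
  rw [if_neg (fun hh => absurd (congrArg Fin.val hh) (by omega)),
    if_neg (fun hh => absurd (congrArg Fin.val hh) (by omega))]

lemma vexp_apply_small {p q m : Fin n} (hm : (m:ℕ) < (p:ℕ) - 1) (hpq : (p:ℕ) ≤ (q:ℕ))
    (h : (q:ℕ) + 1 < n) : vexp a b p q m = 0 := by
  rw [vexp, dif_pos h]
  simp only [Finsupp.add_apply, Finsupp.single_apply, predf]
  rw [if_neg (fun hh => absurd (congrArg Fin.val hh) (by simp; omega)),
    if_neg (fun hh => absurd (congrArg Fin.val hh) (by simp; omega))]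
  rfl

lemma wdeg_uexp_split (p q : Fin n) :
    wdeg a b n (uexp b p q)
      = (1+b) * rep b n + a * (rep b (p:ℕ) + b * rep b (q:ℕ)) := by
  rw [wdeg_uexp, Aw, Aw]; ring

lemma uu_cancel (ha : 0 < a) {p q p' q' : Fin n}
    (hw : wdeg a b n (uexp b p q) = wdeg a b n (uexp b p' q')) :
    rep b (p:ℕ) + b * rep b (q:ℕ) = rep b (p':ℕ) + b * rep b (q':ℕ) := by
  rw [wdeg_uexp_split, wdeg_uexp_split] at hw
  exact Nat.eq_of_mul_eq_mul_left ha (Nat.add_left_cancel hw)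

lemma cond_iff (ha : 0 < a) (hb : 0 < b) (hn : 1 < n)
    {p0 q0 p q : Fin n} (hp0 : 1 ≤ (p0:ℕ)) (hpq0 : (p0:ℕ) ≤ (q0:ℕ))
    (hp : 1 ≤ (p:ℕ)) (hpq : (p:ℕ) ≤ (q:ℕ))
    (hne : ¬ ((p:ℕ) = (p0:ℕ) ∧ (q:ℕ) = (q0:ℕ))) (c : Fin n →₀ ℕ) :
    condA a b n p0 q0 (c + uexp b p q) ↔ condA a b n p0 q0 (c + vexp a b p q) := by
  have hw_iff : (wdeg a b n (c + uexp b p q) = wdeg a b n (uexp b p0 q0))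
      ↔ (wdeg a b n (c + vexp a b p q) = wdeg a b n (uexp b p0 q0)) := by
    rw [wdeg_add, wdeg_add, wdeg_uv a b n hn hp]
  by_cases hq : (q:ℕ) + 1 < n
  · -- first-family shape
    have hdeg : (∑ m, (c + vexp a b p q) m) = (∑ m, (c + uexp b p q) m) := by
      rw [dsum_add, dsum_add, dsum_uexp, dsum_vexp_lo a b n hq]
      omega
    by_cases hq0n : (q0:ℕ) + 1 < n
    · rcases lt_trichotomy (p:ℕ) (p0:ℕ) with hpp | hpp | hpp
      · -- p < p0 : both conditions fail
        constructor <;> intro hcond <;> exfalso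
        · have h0 := hcond.2.2 p hq0n hpp
          rw [Finsupp.add_apply] at h0
          have := uexp_apply_ge_p b n p q
          omega
        · have hpredlt : ((predf p : Fin n) : ℕ) < (p0:ℕ) := by
            simp only [predf]; omega
          have h0 := hcond.2.2 (predf p) hq0n hpredlt
          rw [Finsupp.add_apply] at h0
          have := vexp_apply_pred_lo a b n (p := p) hq
          omega
      · -- p = p0 : both conditions fail (else q = q0, contradiction)
        constructor <;> intro hcond <;> exfalso
        · have hdc : (∑ m, c m) = 0 := by
            have h2 := hcond.2.1
            rw [dsum_add, dsum_uexp] at h2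
            omega
          have hc0 : c = 0 := dsum_zero n hdc
          have hwu : wdeg a b n (uexp b p q) = wdeg a b n (uexp b p0 q0) := by
            have := hcond.1
            rwa [hc0, zero_add] at this
          have hcan := uu_cancel a b n ha hwu
          have hpp' : rep b (p:ℕ) = rep b (p0:ℕ) := by rw [hpp]
          have hbq : b * rep b (q:ℕ) = b * rep b (q0:ℕ) := by omega
          have hq' : rep b (q:ℕ) = rep b (q0:ℕ) := Nat.eq_of_mul_eq_mul_left hb hbq
          exact hne ⟨hpp, (rep_strictMono b hb).injective hq'⟩
        · have hpredlt : ((predf p : Fin n) : ℕ) < (p0:ℕ) := by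
            simp only [predf]; omega
          have h0 := hcond.2.2 (predf p) hq0n hpredlt
          rw [Finsupp.add_apply] at h0
          have := vexp_apply_pred_lo a b n (p := p) hq
          omega
      · -- p0 < p : conditions transfer componentwise
        constructor <;> rintro ⟨h1, h2, h3⟩
        · refine ⟨hw_iff.mp h1, by rw [hdeg]; exact h2, ?_⟩
          intro m hc1 hm
          have hcm : c m = 0 := by
            have := h3 m hc1 hm
            rw [Finsupp.add_apply] at this
            omega
          rw [Finsupp.add_apply, hcm, vexp_apply_small a b n (by omega) hpq hq, add_zero]
        · refine ⟨hw_iff.mpr h1, by rw [← hdeg]; exact h2, ?_⟩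
          intro m hc1 hm
          have hcm : c m = 0 := by
            have := h3 m hc1 hm
            rw [Finsupp.add_apply] at this
            omega
          rw [Finsupp.add_apply, hcm, uexp_apply_small b n (by omega) hpq, add_zero]
    · -- q0 is at the top: third condition vacuous
      constructor <;> rintro ⟨h1, h2, h3⟩
      · exact ⟨hw_iff.mp h1, by rw [hdeg]; exact h2, fun m hc1 _ => absurd hc1 hq0n⟩
      · exact ⟨hw_iff.mpr h1, by rw [← hdeg]; exact h2, fun m hc1 _ => absurd hc1 hq0n⟩
  · -- second-family shape : both conditions fail
    have hqval : (q:ℕ) = n - 1 := by have := q.isLt; omega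
    constructor <;> intro hcond <;> exfalso
    · have hdc : (∑ m, c m) = 0 := by
        have h2 := hcond.2.1
        rw [dsum_add, dsum_uexp] at h2
        omega
      have hc0 : c = 0 := dsum_zero n hdc
      have hwu : wdeg a b n (uexp b p q) = wdeg a b n (uexp b p0 q0) := by
        have := hcond.1
        rwa [hc0, zero_add] at this
      have hcan := uu_cancel a b n ha hwu
      by_cases hq0n : (q0:ℕ) + 1 < n
      · -- then p < p0 and third condition fails at p
        have hq0q : rep b (q0:ℕ) < rep b (q:ℕ) := rep_strictMono b hb (by omega)
        have hbq : b * rep b (q0:ℕ) < b * rep b (q:ℕ) := by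
          have := Nat.mul_lt_mul_of_le_of_lt (le_refl b) hq0q hb
          exact this
        have hplt : rep b (p:ℕ) < rep b (p0:ℕ) := by omega
        have hpval : (p:ℕ) < (p0:ℕ) := by
          by_contra hcc
          have := rep_mono b (show (p0:ℕ) ≤ (p:ℕ) by omega)
          omega
        have h0 := hcond.2.2 p hq0n hpval
        rw [Finsupp.add_apply] at h0
        have := uexp_apply_ge_p b n p q
        omega
      · have hqq0 : (q:ℕ) = (q0:ℕ) := by have := q0.isLt; omega
        have hbq : b * rep b (q:ℕ) = b * rep b (q0:ℕ) := by rw [hqq0]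
        have hreppp : rep b (p:ℕ) = rep b (p0:ℕ) := by omega
        exact hne ⟨(rep_strictMono b hb).injective hreppp, hqq0⟩
    · have h2 := hcond.2.1
      rw [dsum_add, dsum_vexp_hi a b n hq] at h2
      omega

end S16

namespace S16
open MvPolynomial Finsupp

variable (a b n : ℕ) (K : Type*) [Field K]

lemma condA_u0 {p0 q0 : Fin n} (hpq0 : (p0:ℕ) ≤ (q0:ℕ)) :
    condA a b n p0 q0 (uexp b p0 q0) :=
  ⟨rfl, dsum_uexp b n p0 q0, fun m _ hm => uexp_apply_small b n hm hpq0⟩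

lemma condA_v0_false (ha : 0 < a) (hb : 0 < b) {p0 q0 : Fin n} (hp0 : 1 ≤ (p0:ℕ)) :
    ¬ condA a b n p0 q0 (vexp a b p0 q0) := by
  intro hcond
  by_cases hq0 : (q0:ℕ) + 1 < n
  · have hlt : ((predf p0 : Fin n) : ℕ) < (p0:ℕ) := by simp only [predf]; omega
    have h0 := hcond.2.2 (predf p0) hq0 hlt
    have := vexp_apply_pred_lo a b n (p := p0) hq0
    omega
  · have h2 := hcond.2.1
    rw [dsum_vexp_hi a b n hq0] at h2
    omega

lemma lam_Gb0 (ha : 0 < a) (hb : 0 < b) {p0 q0 : Fin n}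
    (hp0 : 1 ≤ (p0:ℕ)) (hpq0 : (p0:ℕ) ≤ (q0:ℕ)) :
    lam n K (condA a b n p0 q0) (Gb K a b p0 q0) = 1 := by
  rw [Gb, show ∀ Q : MvPolynomial (Fin n) K,
      lam n K (condA a b n p0 q0) Q = lamHom n K (condA a b n p0 q0) Q from fun _ => rfl,
    map_sub]
  show lam n K _ _ - lam n K _ _ = 1
  rw [lam_monomial, lam_monomial, if_pos (condA_u0 a b n hpq0),
    if_neg (condA_v0_false a b n ha hb hp0), sub_zero]

lemma Gb_not_in_span (ha : 0 < a) (hb : 0 < b) (hn : 1 < n) {p0 q0 : Fin n}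
    (hp0 : 1 ≤ (p0:ℕ)) (hpq0 : (p0:ℕ) ≤ (q0:ℕ)) :
    Gb K a b p0 q0 ∉ Ideal.span (minorsX K a b n \ {Gb K a b p0 q0}) := by
  intro hmem
  have hspan : Ideal.span (minorsX K a b n \ {Gb K a b p0 q0})
      ≤ lamIdeal n K (condA a b n p0 q0) := by
    rw [Ideal.span_le]
    rintro g ⟨hgmem, hgne⟩
    obtain ⟨p, q, hp, hpq, rfl⟩ := mem_minors a b n K hn hgmem
    intro P
    rw [Gb]
    apply lam_mul
    intro c
    refine cond_iff a b n ha hb hn hp0 hpq0 hp hpq ?_ c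
    rintro ⟨hpe, hqe⟩
    apply hgne
    simp only [Set.mem_singleton_iff]
    rw [show p = p0 from Fin.ext hpe, show q = q0 from Fin.ext hqe]
  have hP := hspan hmem 1
  rw [one_mul, lam_Gb0 a b n K ha hb hp0 hpq0] at hP
  exact one_ne_zero hP

theorem main (ha : 0 < a) (hb : 0 < b) (hn : 1 < n)
    (hgcd : Nat.gcd a (rep b n) = 1) :
    RingHom.ker (φmap K a b n) = Ideal.span (minorsX K a b n) ∧
      ∀ S : Set (MvPolynomial (Fin n) K), S ⊂ minorsX K a b n →
        Ideal.span S ≠ RingHom.ker (φmap K a b n) := by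
  constructor
  · exact ker_eq_span a b n K ha hb hn hgcd
  · intro S hSsub hSeq
    obtain ⟨g0, hg0mem, hg0nS⟩ : ∃ g0, g0 ∈ minorsX K a b n ∧ g0 ∉ S := by
      rcases Set.exists_of_ssubset hSsub with ⟨g0, h1, h2⟩
      exact ⟨g0, h1, h2⟩
    obtain ⟨p0, q0, hp0, hpq0, rfl⟩ := mem_minors a b n K hn hg0mem
    have hker : Gb K a b p0 q0 ∈ RingHom.ker (φmap K a b n) := by
      rw [RingHom.mem_ker]
      exact phi_Gb a b n K hn hp0
    rw [← hSeq] at hker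
    have hsub : S ⊆ minorsX K a b n \ {Gb K a b p0 q0} := by
      intro x hx
      refine ⟨hSsub.1 hx, ?_⟩
      intro hxx
      rw [Set.mem_singleton_iff] at hxx
      rw [hxx] at hx
      exact hg0nS hx
    exact Gb_not_in_span a b n K ha hb hn hp0 hpq0 (Ideal.span_mono hsub hker)

end S16


theorem stmt16 (a b n : ℕ) (ha : 0 < a) (hb : 0 < b) (hn : 1 < n)
    (hgcd : Nat.gcd a (rep b n) = 1) (K : Type*) [Field K] :
    RingHom.ker (φmap K a b n) = Ideal.span (minorsX K a b n) ∧
      ∀ S : Set (MvPolynomial (Fin n) K), S ⊂ minorsX K a b n →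
        Ideal.span S ≠ RingHom.ker (φmap K a b n) :=
  S16.main a b n K ha hb hn hgcd
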